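/- In the game i-Mark({4,8},{2}), for every n ≥ 17 with n = 12q + r, 0 ≤ r ≤ 11: if r ∈ {1,3,4,10} then g(n) = 0; if 5 ≤ r ≤ 8 then g(n) = 1; if r ∈ {2,9,11} then g(n) = 2; and if r = 0 then g(n) ∈ {2,3}. -/
import Mathlib


/-- The minimum excludant of a finite set of naturals. -/
noncomputable def mex (s : Finset ℕ) : ℕ := sInf {k : ℕ | k ∉ s}

/-- Options of the game i-Mark(S,D) from a heap of `n` tokens:
move to `n - s` for `s ∈ S` (with `1 ≤ s ≤ n`), or to `n / d` for `d ∈ D`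
(with `2 ≤ d` and `d ∣ n`, `n ≥ 1`). -/
def iMarkOptions (S D : Finset ℕ) (n : ℕ) : Finset ℕ :=
  ((S.filter (fun s => 1 ≤ s ∧ s ≤ n)).image (fun s => n - s)) ∪
  ((D.filter (fun d => 2 ≤ d ∧ d ∣ n ∧ 1 ≤ n)).image (fun d => n / d))

theorem iMarkOptions_lt {S D : Finset ℕ} {n m : ℕ} (h : m ∈ iMarkOptions S D n) : m < n := by
  simp only [iMarkOptions, Finset.mem_union, Finset.mem_image, Finset.mem_filter] at h
  rcases h with ⟨s, ⟨_, h1, h2⟩, rfl⟩ | ⟨d, ⟨_, h2, hd, hn⟩, rfl⟩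
  · omega
  · exact Nat.div_lt_self hn h2

/-- The Sprague-Grundy value of a heap of `n` tokens in the game i-Mark(S,D). -/
noncomputable def grundy (S D : Finset ℕ) (n : ℕ) : ℕ :=
  mex ((iMarkOptions S D n).attach.image (fun m => grundy S D m.1))
termination_by n
decreasing_by exact iMarkOptions_lt m.2

/-- `misereP S D n` means `n` is a P-position of i-Mark(S,D) under misère convention:
`n` has at least one option and every option is an N-position. -/
def misereP (S D : Finset ℕ) (n : ℕ) : Prop :=
  (iMarkOptions S D n).Nonempty ∧
    ∀ m : {x // x ∈ iMarkOptions S D n}, ¬ misereP S D m.1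
termination_by n
decreasing_by exact iMarkOptions_lt m.2

lemma mex_eq {s : Finset ℕ} {k : ℕ} (h1 : k ∉ s) (h2 : ∀ j < k, j ∈ s) : mex s = k := by
  refine le_antisymm (Nat.sInf_le h1) (le_csInf ⟨k, h1⟩ fun b hb => ?_)
  by_contra hlt
  exact hb (h2 b (by omega))

lemma grundy_eq (S D : Finset ℕ) (n : ℕ) :
    grundy S D n = mex ((iMarkOptions S D n).image (grundy S D)) := by
  rw [grundy]
  congr 1
  ext x
  simp

lemma opts_odd {n : ℕ} (h8 : 8 ≤ n) (hodd : ¬ 2 ∣ n) :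
    iMarkOptions {4, 8} {2} n = {n - 4, n - 8} := by
  ext m
  simp only [iMarkOptions, Finset.mem_union, Finset.mem_image, Finset.mem_filter,
    Finset.mem_insert, Finset.mem_singleton]
  constructor
  · rintro (⟨s, ⟨hs, h1, h2⟩, rfl⟩ | ⟨d, ⟨hd, h2, hdvd, hn⟩, rfl⟩)
    · rcases hs with rfl | rfl <;> omega
    · rcases hd with rfl | rfl
      exact absurd hdvd hodd
  · rintro (rfl | rfl)
    · exact Or.inl ⟨4, ⟨Or.inl rfl, by omega, by omega⟩, rfl⟩
    · exact Or.inl ⟨8, ⟨Or.inr rfl, by omega, by omega⟩, rfl⟩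

lemma opts_even {n : ℕ} (h8 : 8 ≤ n) (heven : 2 ∣ n) :
    iMarkOptions {4, 8} {2} n = {n - 4, n - 8, n / 2} := by
  ext m
  simp only [iMarkOptions, Finset.mem_union, Finset.mem_image, Finset.mem_filter,
    Finset.mem_insert, Finset.mem_singleton]
  constructor
  · rintro (⟨s, ⟨hs, h1, h2⟩, rfl⟩ | ⟨d, ⟨hd, h2, hdvd, hn⟩, rfl⟩)
    · rcases hs with rfl | rfl <;> omega
    · rcases hd with rfl | rfl
      right; right; rfl
  · rintro (rfl | rfl | rfl)
    · exact Or.inl ⟨4, ⟨Or.inl rfl, by omega, by omega⟩, rfl⟩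
    · exact Or.inl ⟨8, ⟨Or.inr rfl, by omega, by omega⟩, rfl⟩
    · exact Or.inr ⟨2, ⟨rfl, by omega, heven, by omega⟩, rfl⟩


lemma gT0 : grundy {4, 8} {2} 0 = 0 := by
  rw [grundy_eq, show iMarkOptions {4, 8} {2} 0 = ∅ from by decide, Finset.image_empty]
  exact mex_eq (by decide) (fun j hj => absurd hj (by omega))

lemma gT1 : grundy {4, 8} {2} 1 = 0 := by
  rw [grundy_eq, show iMarkOptions {4, 8} {2} 1 = ∅ from by decide, Finset.image_empty]
  exact mex_eq (by decide) (fun j hj => absurd hj (by omega))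

lemma gT2 : grundy {4, 8} {2} 2 = 1 := by
  rw [grundy_eq, show iMarkOptions {4, 8} {2} 2 = {1} from by decide,
    Finset.image_singleton, gT1]
  exact mex_eq (by decide) (by decide)

lemma gT3 : grundy {4, 8} {2} 3 = 0 := by
  rw [grundy_eq, show iMarkOptions {4, 8} {2} 3 = ∅ from by decide, Finset.image_empty]
  exact mex_eq (by decide) (fun j hj => absurd hj (by omega))

lemma gT4 : grundy {4, 8} {2} 4 = 2 := by
  rw [grundy_eq, show iMarkOptions {4, 8} {2} 4 = {0, 2} from by decide,
    Finset.image_insert, Finset.image_singleton, gT0, gT2]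
  exact mex_eq (by decide) (by decide)

lemma gT5 : grundy {4, 8} {2} 5 = 1 := by
  rw [grundy_eq, show iMarkOptions {4, 8} {2} 5 = {1} from by decide,
    Finset.image_singleton, gT1]
  exact mex_eq (by decide) (by decide)

lemma gT6 : grundy {4, 8} {2} 6 = 2 := by
  rw [grundy_eq, show iMarkOptions {4, 8} {2} 6 = {2, 3} from by decide,
    Finset.image_insert, Finset.image_singleton, gT2, gT3]
  exact mex_eq (by decide) (by decide)

lemma gT7 : grundy {4, 8} {2} 7 = 1 := by
  rw [grundy_eq, show iMarkOptions {4, 8} {2} 7 = {3} from by decide,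
    Finset.image_singleton, gT3]
  exact mex_eq (by decide) (by decide)

lemma gT8 : grundy {4, 8} {2} 8 = 1 := by
  rw [grundy_eq, show iMarkOptions {4, 8} {2} 8 = {4, 0} from by decide,
    Finset.image_insert, Finset.image_singleton, gT4, gT0]
  exact mex_eq (by decide) (by decide)

lemma gT9 : grundy {4, 8} {2} 9 = 2 := by
  rw [grundy_eq, show iMarkOptions {4, 8} {2} 9 = {5, 1} from by decide,
    Finset.image_insert, Finset.image_singleton, gT5, gT1]
  exact mex_eq (by decide) (by decide)

lemma gT10 : grundy {4, 8} {2} 10 = 0 := by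
  rw [grundy_eq, show iMarkOptions {4, 8} {2} 10 = {6, 2, 5} from by decide,
    Finset.image_insert, Finset.image_insert, Finset.image_singleton, gT6, gT2, gT5]
  exact mex_eq (by decide) (by decide)

lemma gT11 : grundy {4, 8} {2} 11 = 2 := by
  rw [grundy_eq, show iMarkOptions {4, 8} {2} 11 = {7, 3} from by decide,
    Finset.image_insert, Finset.image_singleton, gT7, gT3]
  exact mex_eq (by decide) (by decide)

lemma gT12 : grundy {4, 8} {2} 12 = 0 := by
  rw [grundy_eq, show iMarkOptions {4, 8} {2} 12 = {8, 4, 6} from by decide,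
    Finset.image_insert, Finset.image_insert, Finset.image_singleton, gT8, gT4, gT6]
  exact mex_eq (by decide) (by decide)

lemma gT13 : grundy {4, 8} {2} 13 = 0 := by
  rw [grundy_eq, show iMarkOptions {4, 8} {2} 13 = {9, 5} from by decide,
    Finset.image_insert, Finset.image_singleton, gT9, gT5]
  exact mex_eq (by decide) (by decide)

lemma gT14 : grundy {4, 8} {2} 14 = 3 := by
  rw [grundy_eq, show iMarkOptions {4, 8} {2} 14 = {10, 6, 7} from by decide,
    Finset.image_insert, Finset.image_insert, Finset.image_singleton, gT10, gT6, gT7]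
  exact mex_eq (by decide) (by decide)

lemma gT15 : grundy {4, 8} {2} 15 = 0 := by
  rw [grundy_eq, show iMarkOptions {4, 8} {2} 15 = {11, 7} from by decide,
    Finset.image_insert, Finset.image_singleton, gT11, gT7]
  exact mex_eq (by decide) (by decide)

lemma gT16 : grundy {4, 8} {2} 16 = 2 := by
  rw [grundy_eq, show iMarkOptions {4, 8} {2} 16 = {12, 8} from by decide,
    Finset.image_insert, Finset.image_singleton, gT12, gT8]
  exact mex_eq (by decide) (by decide)


def Qprop (n : ℕ) : Prop :=
  17 ≤ n →
    ((n % 12 = 1 ∨ n % 12 = 3 ∨ n % 12 = 4 ∨ n % 12 = 10) → grundy {4, 8} {2} n = 0) ∧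
    ((5 ≤ n % 12 ∧ n % 12 ≤ 8) → grundy {4, 8} {2} n = 1) ∧
    ((n % 12 = 2 ∨ n % 12 = 9 ∨ n % 12 = 11) → grundy {4, 8} {2} n = 2) ∧
    (n % 12 = 0 → grundy {4, 8} {2} n = 2 ∨ grundy {4, 8} {2} n = 3)

lemma from_Q {m : ℕ} (hQ : Qprop m) (hm : 9 ≤ m) :
    ((m % 12 = 1 ∨ m % 12 = 3 ∨ m % 12 = 10) → grundy {4, 8} {2} m = 0) ∧
    (5 ≤ m % 12 ∧ m % 12 ≤ 8 → grundy {4, 8} {2} m = 1) ∧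
    ((m % 12 = 9 ∨ m % 12 = 11) → grundy {4, 8} {2} m = 2) ∧
    (m % 12 = 2 → grundy {4, 8} {2} m = 2 ∨ grundy {4, 8} {2} m = 3) ∧
    (m % 12 = 4 → grundy {4, 8} {2} m = 0 ∨ grundy {4, 8} {2} m = 2) ∧
    (m % 12 = 0 → grundy {4, 8} {2} m = 0 ∨ grundy {4, 8} {2} m = 2 ∨ grundy {4, 8} {2} m = 3) ∧
    (m % 12 = 0 → 24 ≤ m → grundy {4, 8} {2} m = 2 ∨ grundy {4, 8} {2} m = 3) := by
  by_cases h : m ≤ 16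
  · interval_cases m <;>
      simp only [gT9, gT10, gT11, gT12, gT13, gT14, gT15, gT16] <;> decide
  · obtain ⟨p1, p2, p3, p4⟩ := hQ (by omega)
    omega

set_option maxHeartbeats 3200000 in
lemma key : ∀ n, Qprop n := by
  intro n
  induction n using Nat.strong_induction_on with
  | _ n ih =>
  intro h17
  obtain ⟨q, r, hr, rfl⟩ : ∃ q r, r < 12 ∧ n = 12 * q + r :=
    ⟨n / 12, n % 12, Nat.mod_lt _ (by norm_num), by omega⟩
  interval_cases r
  · -- r = 0
    refine ⟨by omega, by omega, by omega, fun _ => ?_⟩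
    rcases Nat.lt_or_ge q 3 with hq | hq
    · have hq2 : 2 ≤ q := by omega
      interval_cases q
      have e : 12 * 2 + 0 = 24 := by norm_num
      rw [e]
      right
      have h20 := (from_Q (ih 20 (by omega)) (by omega)).2.1 (by omega)
      rw [grundy_eq, show iMarkOptions {4, 8} {2} 24 = {20, 16, 12} from by decide,
        Finset.image_insert, Finset.image_insert, Finset.image_singleton, gT16, gT12]
      exact mex_eq (by simp only [Finset.mem_insert, Finset.mem_singleton]; omega) (fun j hj => by simp only [Finset.mem_insert, Finset.mem_singleton]; omega)
    · have ha := (from_Q (ih (12 * q + 0 - 4) (by omega)) (by omega)).2.1 (by omega)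
      have hb := (ih (12 * q + 0 - 8) (by omega) (by omega)).1 (by omega)
      rcases Nat.even_or_odd q with ⟨t, rfl⟩ | ⟨t, rfl⟩
      · have hc := (from_Q (ih ((12 * (t + t) + 0) / 2) (by omega)) (by omega)).2.2.2.2.2.2
          (by omega) (by omega)
        rw [grundy_eq, opts_even (by omega) (by omega), Finset.image_insert,
      Finset.image_insert, Finset.image_singleton]
        rcases hc with hc | hc
        · right
          exact mex_eq (by simp only [Finset.mem_insert, Finset.mem_singleton]; omega) (fun j hj => by simp only [Finset.mem_insert, Finset.mem_singleton]; omega)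
        · left
          exact mex_eq (by simp only [Finset.mem_insert, Finset.mem_singleton]; omega) (fun j hj => by simp only [Finset.mem_insert, Finset.mem_singleton]; omega)
      · have hc := (from_Q (ih ((12 * (2 * t + 1) + 0) / 2) (by omega)) (by omega)).2.1 (by omega)
        rw [grundy_eq, opts_even (by omega) (by omega), Finset.image_insert,
      Finset.image_insert, Finset.image_singleton]
        left
        exact mex_eq (by simp only [Finset.mem_insert, Finset.mem_singleton]; omega) (fun j hj => by simp only [Finset.mem_insert, Finset.mem_singleton]; omega)
  · -- r = 1
    refine ⟨fun _ => ?_, by omega, by omega, by omega⟩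
    have ha := (from_Q (ih (12 * q + 1 - 4) (by omega)) (by omega)).2.2.1 (by omega)
    have hb := (from_Q (ih (12 * q + 1 - 8) (by omega)) (by omega)).2.1 (by omega)
    rw [grundy_eq, opts_odd (by omega) (by omega), Finset.image_insert, Finset.image_singleton]
    exact mex_eq (by simp only [Finset.mem_insert, Finset.mem_singleton]; omega) (fun j hj => by simp only [Finset.mem_insert, Finset.mem_singleton]; omega)
  · -- r = 2
    refine ⟨by omega, by omega, fun _ => ?_, by omega⟩
    have ha := (from_Q (ih (12 * q + 2 - 4) (by omega)) (by omega)).1 (by omega)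
    have hb := (from_Q (ih (12 * q + 2 - 8) (by omega)) (by omega)).2.1 (by omega)
    rcases Nat.even_or_odd q with ⟨t, rfl⟩ | ⟨t, rfl⟩
    · have hc := (from_Q (ih ((12 * (t + t) + 2) / 2) (by omega)) (by omega)).1 (by omega)
      rw [grundy_eq, opts_even (by omega) (by omega), Finset.image_insert,
      Finset.image_insert, Finset.image_singleton]
      exact mex_eq (by simp only [Finset.mem_insert, Finset.mem_singleton]; omega) (fun j hj => by simp only [Finset.mem_insert, Finset.mem_singleton]; omega)
    · have hc := (from_Q (ih ((12 * (2 * t + 1) + 2) / 2) (by omega)) (by omega)).2.1 (by omega)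
      rw [grundy_eq, opts_even (by omega) (by omega), Finset.image_insert,
      Finset.image_insert, Finset.image_singleton]
      exact mex_eq (by simp only [Finset.mem_insert, Finset.mem_singleton]; omega) (fun j hj => by simp only [Finset.mem_insert, Finset.mem_singleton]; omega)
  · -- r = 3
    refine ⟨fun _ => ?_, by omega, by omega, by omega⟩
    have ha := (from_Q (ih (12 * q + 3 - 4) (by omega)) (by omega)).2.2.1 (by omega)
    have hb := (from_Q (ih (12 * q + 3 - 8) (by omega)) (by omega)).2.1 (by omega)
    rw [grundy_eq, opts_odd (by omega) (by omega), Finset.image_insert, Finset.image_singleton]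
    exact mex_eq (by simp only [Finset.mem_insert, Finset.mem_singleton]; omega) (fun j hj => by simp only [Finset.mem_insert, Finset.mem_singleton]; omega)
  · -- r = 4
    refine ⟨fun _ => ?_, by omega, by omega, by omega⟩
    have ha := (from_Q (ih (12 * q + 4 - 4) (by omega)) (by omega)).2.2.2.2.2.2
      (by omega) (by omega)
    have hb := (from_Q (ih (12 * q + 4 - 8) (by omega)) (by omega)).2.1 (by omega)
    rcases Nat.even_or_odd q with ⟨t, rfl⟩ | ⟨t, rfl⟩
    · have hc := (from_Q (ih ((12 * (t + t) + 4) / 2) (by omega)) (by omega)).2.2.2.1 (by omega)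
      rw [grundy_eq, opts_even (by omega) (by omega), Finset.image_insert,
      Finset.image_insert, Finset.image_singleton]
      exact mex_eq (by simp only [Finset.mem_insert, Finset.mem_singleton]; omega) (fun j hj => by simp only [Finset.mem_insert, Finset.mem_singleton]; omega)
    · have hc := (from_Q (ih ((12 * (2 * t + 1) + 4) / 2) (by omega)) (by omega)).2.1 (by omega)
      rw [grundy_eq, opts_even (by omega) (by omega), Finset.image_insert,
      Finset.image_insert, Finset.image_singleton]
      exact mex_eq (by simp only [Finset.mem_insert, Finset.mem_singleton]; omega) (fun j hj => by simp only [Finset.mem_insert, Finset.mem_singleton]; omega)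
  · -- r = 5
    refine ⟨by omega, fun _ => ?_, by omega, by omega⟩
    have ha := (from_Q (ih (12 * q + 5 - 4) (by omega)) (by omega)).1 (by omega)
    have hb := (from_Q (ih (12 * q + 5 - 8) (by omega)) (by omega)).2.2.1 (by omega)
    rw [grundy_eq, opts_odd (by omega) (by omega), Finset.image_insert, Finset.image_singleton]
    exact mex_eq (by simp only [Finset.mem_insert, Finset.mem_singleton]; omega) (fun j hj => by simp only [Finset.mem_insert, Finset.mem_singleton]; omega)
  · -- r = 6
    refine ⟨by omega, fun _ => ?_, by omega, by omega⟩
    have ha := (from_Q (ih (12 * q + 6 - 4) (by omega)) (by omega)).2.2.2.1 (by omega)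
    have hb := (from_Q (ih (12 * q + 6 - 8) (by omega)) (by omega)).1 (by omega)
    rcases Nat.even_or_odd q with ⟨t, rfl⟩ | ⟨t, rfl⟩
    · have hc := (from_Q (ih ((12 * (t + t) + 6) / 2) (by omega)) (by omega)).1 (by omega)
      rw [grundy_eq, opts_even (by omega) (by omega), Finset.image_insert,
      Finset.image_insert, Finset.image_singleton]
      exact mex_eq (by simp only [Finset.mem_insert, Finset.mem_singleton]; omega) (fun j hj => by simp only [Finset.mem_insert, Finset.mem_singleton]; omega)
    · have hc := (from_Q (ih ((12 * (2 * t + 1) + 6) / 2) (by omega)) (by omega)).2.2.1 (by omega)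
      rw [grundy_eq, opts_even (by omega) (by omega), Finset.image_insert,
      Finset.image_insert, Finset.image_singleton]
      exact mex_eq (by simp only [Finset.mem_insert, Finset.mem_singleton]; omega) (fun j hj => by simp only [Finset.mem_insert, Finset.mem_singleton]; omega)
  · -- r = 7
    refine ⟨by omega, fun _ => ?_, by omega, by omega⟩
    have ha := (from_Q (ih (12 * q + 7 - 4) (by omega)) (by omega)).1 (by omega)
    have hb := (from_Q (ih (12 * q + 7 - 8) (by omega)) (by omega)).2.2.1 (by omega)
    rw [grundy_eq, opts_odd (by omega) (by omega), Finset.image_insert, Finset.image_singleton]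
    exact mex_eq (by simp only [Finset.mem_insert, Finset.mem_singleton]; omega) (fun j hj => by simp only [Finset.mem_insert, Finset.mem_singleton]; omega)
  · -- r = 8
    refine ⟨by omega, fun _ => ?_, by omega, by omega⟩
    rcases Nat.lt_or_ge q 2 with hq | hq
    · have hq1 : 1 ≤ q := by omega
      interval_cases q
      have e : 12 * 1 + 8 = 20 := by norm_num
      rw [e]
      rw [grundy_eq, show iMarkOptions {4, 8} {2} 20 = {16, 12, 10} from by decide,
        Finset.image_insert, Finset.image_insert, Finset.image_singleton, gT16, gT12, gT10]
      exact mex_eq (by decide) (by decide)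
    · have ha := (ih (12 * q + 8 - 4) (by omega) (by omega)).1 (by omega)
      have hb := (from_Q (ih (12 * q + 8 - 8) (by omega)) (by omega)).2.2.2.2.2.1 (by omega)
      rcases Nat.even_or_odd q with ⟨t, rfl⟩ | ⟨t, rfl⟩
      · have hc := (from_Q (ih ((12 * (t + t) + 8) / 2) (by omega)) (by omega)).2.2.2.2.1 (by omega)
        rw [grundy_eq, opts_even (by omega) (by omega), Finset.image_insert,
      Finset.image_insert, Finset.image_singleton]
        exact mex_eq (by simp only [Finset.mem_insert, Finset.mem_singleton]; omega) (fun j hj => by simp only [Finset.mem_insert, Finset.mem_singleton]; omega)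
      · have hc := (from_Q (ih ((12 * (2 * t + 1) + 8) / 2) (by omega)) (by omega)).1 (by omega)
        rw [grundy_eq, opts_even (by omega) (by omega), Finset.image_insert,
      Finset.image_insert, Finset.image_singleton]
        exact mex_eq (by simp only [Finset.mem_insert, Finset.mem_singleton]; omega) (fun j hj => by simp only [Finset.mem_insert, Finset.mem_singleton]; omega)
  · -- r = 9
    refine ⟨by omega, by omega, fun _ => ?_, by omega⟩
    have ha := (from_Q (ih (12 * q + 9 - 4) (by omega)) (by omega)).2.1 (by omega)
    have hb := (from_Q (ih (12 * q + 9 - 8) (by omega)) (by omega)).1 (by omega)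
    rw [grundy_eq, opts_odd (by omega) (by omega), Finset.image_insert, Finset.image_singleton]
    exact mex_eq (by simp only [Finset.mem_insert, Finset.mem_singleton]; omega) (fun j hj => by simp only [Finset.mem_insert, Finset.mem_singleton]; omega)
  · -- r = 10
    refine ⟨fun _ => ?_, by omega, by omega, by omega⟩
    have ha := (from_Q (ih (12 * q + 10 - 4) (by omega)) (by omega)).2.1 (by omega)
    have hb := (from_Q (ih (12 * q + 10 - 8) (by omega)) (by omega)).2.2.2.1 (by omega)
    rcases Nat.even_or_odd q with ⟨t, rfl⟩ | ⟨t, rfl⟩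
    · have hc := (from_Q (ih ((12 * (t + t) + 10) / 2) (by omega)) (by omega)).2.1 (by omega)
      rw [grundy_eq, opts_even (by omega) (by omega), Finset.image_insert,
      Finset.image_insert, Finset.image_singleton]
      exact mex_eq (by simp only [Finset.mem_insert, Finset.mem_singleton]; omega) (fun j hj => by simp only [Finset.mem_insert, Finset.mem_singleton]; omega)
    · have hc := (from_Q (ih ((12 * (2 * t + 1) + 10) / 2) (by omega)) (by omega)).2.2.1 (by omega)
      rw [grundy_eq, opts_even (by omega) (by omega), Finset.image_insert,
      Finset.image_insert, Finset.image_singleton]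
      exact mex_eq (by simp only [Finset.mem_insert, Finset.mem_singleton]; omega) (fun j hj => by simp only [Finset.mem_insert, Finset.mem_singleton]; omega)
  · -- r = 11
    refine ⟨by omega, by omega, fun _ => ?_, by omega⟩
    have ha := (from_Q (ih (12 * q + 11 - 4) (by omega)) (by omega)).2.1 (by omega)
    have hb := (from_Q (ih (12 * q + 11 - 8) (by omega)) (by omega)).1 (by omega)
    rw [grundy_eq, opts_odd (by omega) (by omega), Finset.image_insert, Finset.image_singleton]
    exact mex_eq (by simp only [Finset.mem_insert, Finset.mem_singleton]; omega) (fun j hj => by simp only [Finset.mem_insert, Finset.mem_singleton]; omega)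


/-- Sprague-Grundy values of i-Mark({4,8},{2}) for n ≥ 17. -/
theorem iMark_48_2_grundy (n : ℕ) (hn : 17 ≤ n) :
    ((n % 12 = 1 ∨ n % 12 = 3 ∨ n % 12 = 4 ∨ n % 12 = 10) → grundy {4, 8} {2} n = 0) ∧
    ((5 ≤ n % 12 ∧ n % 12 ≤ 8) → grundy {4, 8} {2} n = 1) ∧
    ((n % 12 = 2 ∨ n % 12 = 9 ∨ n % 12 = 11) → grundy {4, 8} {2} n = 2) ∧
    (n % 12 = 0 → grundy {4, 8} {2} n = 2 ∨ grundy {4, 8} {2} n = 3) := by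
  exact key n hn
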